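/- For any function F : F_{2^n} → F_{2^n} and any b ∈ F_{2^n}, Σ_{v ∈ F_{2^n}} W_F(bv, v)^2 = 2^n · Σ_{γ ∈ F_{2^n}} |{z ∈ F_{2^n} : F(z+γ) + F(γ) + b·z = 0}|. -/

import Mathlib

open scoped Classical
open Finset

noncomputable instance (n : ℕ) : Fintype (GaloisField 2 n) := Fintype.ofFinite _

/-- The absolute trace from `GF(2^n)` to `GF(2)`. -/
noncomputable def tr (n : ℕ) (x : GaloisField 2 n) : ZMod 2 :=
  Algebra.trace (ZMod 2) (GaloisField 2 n) x

/-- The Walsh transform of `F` at `(u, v)`. -/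
noncomputable def W (n : ℕ) (F : GaloisField 2 n → GaloisField 2 n)
    (u v : GaloisField 2 n) : ℤ :=
  ∑ x : GaloisField 2 n, (-1 : ℤ) ^ (tr n (v * F x) + tr n (u * x)).val

/-- `F` is an o-polynomial: for every nonzero `b` and every `a`, the equation
`F x + b * x = a` has 0 or 2 solutions. -/
def IsOPoly (n : ℕ) (F : GaloisField 2 n → GaloisField 2 n) : Prop :=
  ∀ b : GaloisField 2 n, b ≠ 0 → ∀ a : GaloisField 2 n,
    Nat.card {x : GaloisField 2 n // F x + b * x = a} = 0 ∨
    Nat.card {x : GaloisField 2 n // F x + b * x = a} = 2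

lemma neg_one_pow_add' (a c : ZMod 2) :
    ((-1 : ℤ)) ^ (a + c).val = ((-1 : ℤ)) ^ a.val * ((-1 : ℤ)) ^ c.val := by
  revert a c; decide

lemma tr_add' (n : ℕ) (x y : GaloisField 2 n) : tr n (x + y) = tr n x + tr n y := by
  simp [tr, map_add]

lemma gf_add_self (n : ℕ) (x : GaloisField 2 n) : x + x = 0 := by
  have h2 : (2 : GaloisField 2 n) = 0 := by
    simpa using CharP.cast_eq_zero (GaloisField 2 n) 2
  calc x + x = 2 * x := by ring
    _ = 0 := by rw [h2, zero_mul]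

/-- The self-inverse reindexing `(z, γ) ↦ (z + γ, γ)` in characteristic two. -/
noncomputable def flipEquiv (n : ℕ) :
    GaloisField 2 n × GaloisField 2 n ≃ GaloisField 2 n × GaloisField 2 n where
  toFun p := (p.1 + p.2, p.2)
  invFun p := (p.1 + p.2, p.2)
  left_inv p := by
    ext
    · show p.1 + p.2 + p.2 = p.1
      rw [add_assoc, gf_add_self, add_zero]
    · rfl
  right_inv p := by
    ext
    · show p.1 + p.2 + p.2 = p.1
      rw [add_assoc, gf_add_self, add_zero]
    · rfl

lemma char_sum (n : ℕ) (hn : 0 < n) (c : GaloisField 2 n) :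
    ∑ v : GaloisField 2 n, ((-1 : ℤ)) ^ (tr n (v * c)).val =
      if c = 0 then (2 ^ n : ℤ) else 0 := by
  split_ifs with h
  · subst h
    have hcard : Fintype.card (GaloisField 2 n) = 2 ^ n := by
      have := GaloisField.card 2 n hn.ne'
      simpa [Nat.card_eq_fintype_card] using this
    simp [tr, hcard]
  · obtain ⟨w, hw⟩ : ∃ w, tr n (w * c) ≠ 0 := by
      by_contra hc
      push_neg at hc
      exact h ((traceForm_nondegenerate (ZMod 2) (GaloisField 2 n)).1 c
        (fun w => by simpa [Algebra.traceForm_apply, mul_comm, tr] using hc w))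
    have hw1 : ((-1 : ℤ)) ^ (tr n (w * c)).val = -1 := by
      have h1 : tr n (w * c) = 1 := by
        revert hw; generalize tr n (w * c) = a; revert a; decide
      rw [h1]; rfl
    have key : ∑ v : GaloisField 2 n, ((-1:ℤ)) ^ (tr n (v * c)).val
        = -∑ v : GaloisField 2 n, ((-1:ℤ)) ^ (tr n (v * c)).val := by
      nth_rewrite 1 [← Equiv.sum_comp (Equiv.addLeft w)
        (fun v => ((-1:ℤ)) ^ (tr n (v * c)).val)]
      rw [← Finset.sum_neg_distrib]
      apply Finset.sum_congr rfl
      intro v _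
      have h2 : (Equiv.addLeft w) v * c = w * c + v * c := by
        simp [Equiv.addLeft]; ring
      rw [h2, tr_add', neg_one_pow_add', hw1]; ring
    linarith

theorem square_walsh_sum_as_derivative_count (n : ℕ) (hn : 0 < n)
    (F : GaloisField 2 n → GaloisField 2 n) (b : GaloisField 2 n) :
    ∑ v : GaloisField 2 n, W n F (b * v) v ^ 2 =
      2 ^ n * ∑ γ : GaloisField 2 n,
        (Nat.card {z : GaloisField 2 n // F (z + γ) + F γ + b * z = 0} : ℤ) := by
  classical
  set c : GaloisField 2 n × GaloisField 2 n → GaloisField 2 n :=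
    fun p => F p.1 + F p.2 + b * (p.1 + p.2) with hc
  have hA : ∀ v : GaloisField 2 n, W n F (b * v) v ^ 2 =
      ∑ p : GaloisField 2 n × GaloisField 2 n, ((-1:ℤ)) ^ (tr n (v * c p)).val := by
    intro v
    rw [W, sq, Finset.sum_mul_sum, Fintype.sum_prod_type]
    apply Finset.sum_congr rfl; intro x _
    apply Finset.sum_congr rfl; intro y _
    rw [← neg_one_pow_add']
    congr 2
    have h3 : v * c (x, y) = (v * F x + b * v * x) + (v * F y + b * v * y) := by
      simp only [hc]; ring
    rw [h3, tr_add']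
    congr 1 <;> rw [tr_add']
  have hstep : ∑ v : GaloisField 2 n, W n F (b * v) v ^ 2 =
      2 ^ n * ∑ p : GaloisField 2 n × GaloisField 2 n,
        (if c p = 0 then (1 : ℤ) else 0) := by
    calc ∑ v : GaloisField 2 n, W n F (b * v) v ^ 2
        = ∑ v : GaloisField 2 n, ∑ p : GaloisField 2 n × GaloisField 2 n,
            ((-1:ℤ)) ^ (tr n (v * c p)).val :=
          Finset.sum_congr rfl (fun v _ => hA v)
      _ = ∑ p : GaloisField 2 n × GaloisField 2 n, ∑ v : GaloisField 2 n,
            ((-1:ℤ)) ^ (tr n (v * c p)).val := Finset.sum_comm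
      _ = ∑ p : GaloisField 2 n × GaloisField 2 n,
            (if c p = 0 then (2 ^ n : ℤ) else 0) :=
          Finset.sum_congr rfl (fun p _ => char_sum n hn (c p))
      _ = 2 ^ n * ∑ p : GaloisField 2 n × GaloisField 2 n,
            (if c p = 0 then (1 : ℤ) else 0) := by
          rw [Finset.mul_sum]
          exact Finset.sum_congr rfl (fun p _ => by split_ifs <;> ring)
  rw [hstep]
  congr 1
  calc ∑ p : GaloisField 2 n × GaloisField 2 n, (if c p = 0 then (1 : ℤ) else 0)
      = ∑ p : GaloisField 2 n × GaloisField 2 n,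
          (if c (flipEquiv n p) = 0 then (1 : ℤ) else 0) :=
        (Equiv.sum_comp (flipEquiv n)
          (fun p => if c p = 0 then (1 : ℤ) else 0)).symm
    _ = ∑ p : GaloisField 2 n × GaloisField 2 n,
          (if F (p.1 + p.2) + F p.2 + b * p.1 = 0 then (1 : ℤ) else 0) := by
        apply Finset.sum_congr rfl
        intro p _
        have h4 : c (flipEquiv n p) = F (p.1 + p.2) + F p.2 + b * p.1 := by
          simp only [hc, flipEquiv, Equiv.coe_fn_mk]
          rw [add_assoc p.1 p.2 p.2, gf_add_self, add_zero]
        rw [h4]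
    _ = ∑ γ : GaloisField 2 n, ∑ z : GaloisField 2 n,
          (if F (z + γ) + F γ + b * z = 0 then (1 : ℤ) else 0) := by
        rw [Fintype.sum_prod_type, Finset.sum_comm]
    _ = ∑ γ : GaloisField 2 n,
          (Nat.card {z : GaloisField 2 n // F (z + γ) + F γ + b * z = 0} : ℤ) := by
        apply Finset.sum_congr rfl
        intro γ _
        rw [Nat.card_eq_fintype_card, Fintype.card_subtype, Finset.card_filter]
        push_cast
        rfl
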